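/- arXiv:2002.01538 — 3 statements merged into one kernel-verified Lean document; each statement's English description precedes it below -/
import Mathlib

section
/- Let A and B be power series over a ring R, with A of the form 1 + a·tⁿ + (higher order terms) and B of the form 1 + b·tᵐ + (higher order terms), where a, b ∈ R and n, m ≥ 1. Then the multiplicative commutator A·B·A⁻¹·B⁻¹ in the group of units of R⟦t⟧ equals 1 + (ab - ba)·t^{n+m} + (terms of order > n+m); that is, the coefficient of tᵏ of the commutator vanishes for 1 ≤ k < n+m and the coefficient of t^{n+m} equals ab - ba. -/
open PowerSeries Finset

lemma aux_single {R : Type*} [Ring R] (D E : PowerSeries R) (hE0 : coeff 0 E = 1)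
    (k : ℕ) (hDk : ∀ i, i < k → coeff i D = 0) :
    coeff k (D * E) = coeff k D := by
  rw [coeff_mul, Finset.sum_eq_single (k, 0)]
  · simp [hE0]
  · intro p hp hne
    rw [Finset.HasAntidiagonal.mem_antidiagonal] at hp
    rcases lt_or_ge p.1 k with h | h
    · rw [hDk p.1 h, zero_mul]
    · have h1 : p.1 = k := le_antisymm (by omega) h
      have h2 : p.2 = 0 := by omega
      exact absurd (Prod.ext h1 h2) hne
  · intro h
    exact absurd (by simp [Finset.HasAntidiagonal.mem_antidiagonal]) h

lemma aux_mul1 {R : Type*} [Ring R] (f g : PowerSeries R) (n m : ℕ)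
    (hf : ∀ k, 1 ≤ k → k < n → coeff k f = 0)
    (hg : ∀ k, 1 ≤ k → k < m → coeff k g = 0)
    (hf0 : coeff 0 f = 1) (hg0 : coeff 0 g = 1)
    (k : ℕ) (h1 : 1 ≤ k) (h2 : k < n + m) :
    coeff k (f * g) = coeff k f + coeff k g := by
  rw [coeff_mul]
  have hsub : ({(0, k), (k, 0)} : Finset (ℕ × ℕ)) ⊆ Finset.HasAntidiagonal.antidiagonal k := by
    intro p hp
    simp only [Finset.mem_insert, Finset.mem_singleton] at hp
    rcases hp with rfl | rfl <;> simp [Finset.HasAntidiagonal.mem_antidiagonal]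
  rw [← Finset.sum_subset hsub]
  · rw [Finset.sum_pair (by simp; omega)]
    simp [hf0, hg0, add_comm]
  · intro p hp hnp
    rw [Finset.HasAntidiagonal.mem_antidiagonal] at hp
    simp only [Finset.mem_insert, Finset.mem_singleton] at hnp
    push_neg at hnp
    have hp1 : 1 ≤ p.1 := by
      rcases Nat.eq_zero_or_pos p.1 with h | h
      · exact absurd (Prod.ext h (by omega)) hnp.1
      · exact h
    have hp2 : 1 ≤ p.2 := by
      rcases Nat.eq_zero_or_pos p.2 with h | h
      · exact absurd (Prod.ext (by omega) h) hnp.2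
      · exact h
    rcases lt_or_ge p.1 n with h | h
    · rw [hf p.1 hp1 h, zero_mul]
    · rw [hg p.2 hp2 (by omega), mul_zero]

lemma aux_mul2 {R : Type*} [Ring R] (f g : PowerSeries R) (n m : ℕ)
    (hn : 1 ≤ n) (hm : 1 ≤ m)
    (hf : ∀ k, 1 ≤ k → k < n → coeff k f = 0)
    (hg : ∀ k, 1 ≤ k → k < m → coeff k g = 0)
    (hf0 : coeff 0 f = 1) (hg0 : coeff 0 g = 1) :
    coeff (n + m) (f * g)
      = coeff (n + m) f + coeff (n + m) g + coeff n f * coeff m g := by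
  rw [coeff_mul]
  have hsub : ({(0, n + m), (n, m), (n + m, 0)} : Finset (ℕ × ℕ)) ⊆ Finset.HasAntidiagonal.antidiagonal (n + m) := by
    intro p hp
    simp only [Finset.mem_insert, Finset.mem_singleton] at hp
    rcases hp with rfl | rfl | rfl <;> simp [Finset.HasAntidiagonal.mem_antidiagonal]
  rw [← Finset.sum_subset hsub]
  · rw [Finset.sum_insert (by simp; omega), Finset.sum_pair (by simp; omega)]
    simp [hf0, hg0]
    abel
  · intro p hp hnp
    rw [Finset.HasAntidiagonal.mem_antidiagonal] at hp
    simp only [Finset.mem_insert, Finset.mem_singleton] at hnp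
    push_neg at hnp
    have hp1 : 1 ≤ p.1 := by
      rcases Nat.eq_zero_or_pos p.1 with h | h
      · exact absurd (Prod.ext h (by omega)) hnp.1
      · exact h
    have hp2 : 1 ≤ p.2 := by
      rcases Nat.eq_zero_or_pos p.2 with h | h
      · exact absurd (Prod.ext (by omega) h) hnp.2.2
      · exact h
    rcases lt_or_ge p.1 n with h | h
    · rw [hf p.1 hp1 h, zero_mul]
    · have hne : p.1 ≠ n ∨ p.2 ≠ m := by
        by_contra hc
        push_neg at hc
        exact hnp.2.1 (Prod.ext hc.1 hc.2)
      have : n < p.1 := by omega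
      rw [hg p.2 hp2 (by omega), mul_zero]

/-- Leading term of a multiplicative commutator in `1 + tR⟦t⟧`:
if `A = 1 + a tⁿ + (higher)` and `B = 1 + b tᵐ + (higher)` (with `n, m ≥ 1`),
then `A * B * A⁻¹ * B⁻¹ = 1 + (ab - ba) t^(n+m) + (higher)`. -/
theorem stmt1 (R : Type*) [Ring R] (A B : (PowerSeries R)ˣ) (a b : R) (n m : ℕ)
    (hn : 1 ≤ n) (hm : 1 ≤ m)
    (hA0 : PowerSeries.constantCoeff (A : PowerSeries R) = 1)
    (hA1 : ∀ k, 1 ≤ k → k < n → PowerSeries.coeff k (A : PowerSeries R) = 0)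
    (hAn : PowerSeries.coeff n (A : PowerSeries R) = a)
    (hB0 : PowerSeries.constantCoeff (B : PowerSeries R) = 1)
    (hB1 : ∀ k, 1 ≤ k → k < m → PowerSeries.coeff k (B : PowerSeries R) = 0)
    (hBm : PowerSeries.coeff m (B : PowerSeries R) = b) :
    (∀ k, 1 ≤ k → k < n + m →
      PowerSeries.coeff k ((A * B * A⁻¹ * B⁻¹ : (PowerSeries R)ˣ) : PowerSeries R) = 0) ∧
    PowerSeries.coeff (n + m)
      ((A * B * A⁻¹ * B⁻¹ : (PowerSeries R)ˣ) : PowerSeries R) = a * b - b * a := by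
  have hA0' : coeff 0 (A : PowerSeries R) = 1 := by
    rwa [coeff_zero_eq_constantCoeff]
  have hB0' : coeff 0 (B : PowerSeries R) = 1 := by
    rwa [coeff_zero_eq_constantCoeff]
  set C : (PowerSeries R)ˣ := A * B * A⁻¹ * B⁻¹ with hC
  have hCE : (C : PowerSeries R) * ((B : PowerSeries R) * (A : PowerSeries R))
      = (A : PowerSeries R) * (B : PowerSeries R) := by
    have h : C * (B * A) = A * B := by rw [hC]; group
    exact_mod_cast congrArg Units.val h
  set D := (C : PowerSeries R) - 1 with hD
  set E := (B : PowerSeries R) * (A : PowerSeries R) with hE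
  have hDE : D * E = (A : PowerSeries R) * B - (B : PowerSeries R) * A := by
    rw [hD, sub_mul, one_mul, hCE]
  have hE0 : coeff 0 E = 1 := by
    simp [hE, coeff_zero_eq_constantCoeff, map_mul, hA0, hB0]
  have hdiff0 : ∀ k, 1 ≤ k → k < n + m →
      coeff k ((A : PowerSeries R) * (B : PowerSeries R) - (B : PowerSeries R) * (A : PowerSeries R)) = 0 := by
    intro k h1 h2
    rw [map_sub, aux_mul1 _ _ n m hA1 hB1 hA0' hB0' k h1 h2,
      aux_mul1 _ _ m n hB1 hA1 hB0' hA0' k h1 (by omega), add_comm, sub_self]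
  have hdiffnm : coeff (n + m)
      ((A : PowerSeries R) * (B : PowerSeries R) - (B : PowerSeries R) * (A : PowerSeries R)) = a * b - b * a := by
    have hBA := aux_mul2 (B : PowerSeries R) (A : PowerSeries R) m n hm hn hB1 hA1 hB0' hA0'
    rw [Nat.add_comm m n] at hBA
    rw [map_sub, aux_mul2 _ _ n m hn hm hA1 hB1 hA0' hB0', hBA, hAn, hBm]
    abel
  have hDk : ∀ k, k < n + m → coeff k D = 0 := by
    intro k
    induction k using Nat.strong_induction_on with
    | _ k ih =>
      intro hk
      have h := congrArg (coeff k) hDE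
      rw [aux_single D E hE0 k (fun i hi => ih i hi (by omega))] at h
      rw [h]
      rcases Nat.eq_zero_or_pos k with rfl | h1
      · simp [coeff_zero_eq_constantCoeff, map_mul, hA0, hB0]
      · exact hdiff0 k h1 hk
  have hDnm : coeff (n + m) D = a * b - b * a := by
    have h := congrArg (coeff (n + m)) hDE
    rw [aux_single D E hE0 (n + m) (fun i hi => hDk i hi)] at h
    rw [h, hdiffnm]
  have hCD : (C : PowerSeries R) = D + 1 := by rw [hD, sub_add_cancel]
  constructor
  · intro k h1 h2
    rw [hCD, map_add, hDk k h2, coeff_one, if_neg (by omega), add_zero]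
  · rw [hCD, map_add, hDnm, coeff_one, if_neg (by omega), add_zero]
end

section
/- Let R be a ring and let f, g ∈ R⟦t⟧ be power series, at least one of which has constant term zero. Then (1 - f·g)·(1 - g·f)⁻¹ lies in the kernel of the natural map from the group of power series with constant term 1 to the big Witt vector group W(R), i.e. 1 - fg and 1 - gf become equal after quotienting by the closure of the subgroup generated by commutators and elements (1+rst)(1+srt)⁻¹ for r,s ∈ R. -/
open PowerSeries

/-- The set of defining relations for `W(R)` inside the unit group of `R⟦t⟧`:
commutators of special units (constant term `1`), together with the elements
`(1 + rst) * (1 + srt)⁻¹` for `r, s ∈ R`. -/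
def WittRelations (R : Type*) [Ring R] : Set (PowerSeries R)ˣ :=
  {x | ∃ a b : (PowerSeries R)ˣ,
      PowerSeries.constantCoeff (a : PowerSeries R) = 1 ∧
      PowerSeries.constantCoeff (b : PowerSeries R) = 1 ∧
      x = a * b * a⁻¹ * b⁻¹} ∪
  {x | ∃ (r s : R) (u v : (PowerSeries R)ˣ),
      (u : PowerSeries R) = 1 + PowerSeries.C (r * s) * PowerSeries.X ∧
      (v : PowerSeries R) = 1 + PowerSeries.C (s * r) * PowerSeries.X ∧
      x = u * v⁻¹}

namespace WittSwapAux

variable {R : Type*} [Ring R]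

/-- A power series with constant coefficient `1` as a unit. -/
noncomputable def uo (p : PowerSeries R) (hp : constantCoeff p = 1) : (PowerSeries R)ˣ :=
  ⟨p, PowerSeries.invOfUnit p 1,
    PowerSeries.mul_invOfUnit p 1 (by simpa using hp),
    PowerSeries.invOfUnit_mul p 1 (by simpa using hp)⟩

@[simp] lemma uo_coe (p : PowerSeries R) (hp : constantCoeff p = 1) :
    ((uo p hp : (PowerSeries R)ˣ) : PowerSeries R) = p := rfl

lemma constantCoeff_inv_eq_one (z : (PowerSeries R)ˣ)
    (hz : constantCoeff (z : PowerSeries R) = 1) :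
    constantCoeff ((z⁻¹ : (PowerSeries R)ˣ) : PowerSeries R) = 1 := by
  have h : (z : PowerSeries R) * ((z⁻¹ : (PowerSeries R)ˣ) : PowerSeries R) = 1 := z.mul_inv
  have h2 := congrArg (constantCoeff) h
  rw [map_mul, hz, one_mul, map_one] at h2
  exact h2

/-- The subgroup of units with constant coefficient 1. -/
def constOneSubgroup : Subgroup (PowerSeries R)ˣ where
  carrier := {x | constantCoeff (x : PowerSeries R) = 1}
  one_mem' := by simp
  mul_mem' := by
    intro a b ha hb
    simp only [Set.mem_setOf_eq, Units.val_mul, map_mul] at *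
    rw [ha, hb, one_mul]
  inv_mem' := by
    intro a ha
    exact constantCoeff_inv_eq_one a ha

lemma const_of_mem_closure {x : (PowerSeries R)ˣ}
    (hx : x ∈ Subgroup.closure (WittRelations R)) :
    constantCoeff (x : PowerSeries R) = 1 := by
  have hle : Subgroup.closure (WittRelations R) ≤ constOneSubgroup := by
    rw [Subgroup.closure_le]
    rintro x (⟨a, b, ha, hb, rfl⟩ | ⟨r, s, u, v, hu, hv, rfl⟩)
    · have ha' := constantCoeff_inv_eq_one a ha
      have hb' := constantCoeff_inv_eq_one b hb
      show constantCoeff ((a * b * a⁻¹ * b⁻¹ : (PowerSeries R)ˣ) : PowerSeries R) = 1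
      simp only [Units.val_mul, map_mul, ha, hb, ha', hb', one_mul]
    · have hu1 : constantCoeff (u : PowerSeries R) = 1 := by
        rw [hu]; simp
      have hv1 : constantCoeff (v : PowerSeries R) = 1 := by
        rw [hv]; simp
      have hv' := constantCoeff_inv_eq_one v hv1
      show constantCoeff ((u * v⁻¹ : (PowerSeries R)ˣ) : PowerSeries R) = 1
      simp only [Units.val_mul, map_mul, hu1, hv', one_mul]
  exact hle hx

lemma comm_mem (a b : (PowerSeries R)ˣ)
    (ha : constantCoeff (a : PowerSeries R) = 1)
    (hb : constantCoeff (b : PowerSeries R) = 1) :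
    a * b * a⁻¹ * b⁻¹ ∈ Subgroup.closure (WittRelations R) :=
  Subgroup.subset_closure (Or.inl ⟨a, b, ha, hb, rfl⟩)

lemma conj_mem (u x : (PowerSeries R)ˣ)
    (hu : constantCoeff (u : PowerSeries R) = 1)
    (hx : x ∈ Subgroup.closure (WittRelations R)) :
    u * x * u⁻¹ ∈ Subgroup.closure (WittRelations R) := by
  have h1 := comm_mem u x hu (const_of_mem_closure hx)
  have h2 := (Subgroup.closure (WittRelations R)).mul_mem h1 hx
  have h3 : u * x * u⁻¹ * x⁻¹ * x = u * x * u⁻¹ := by group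
  rwa [h3] at h2

/-- Key lemma: if `P, Q` both have zero constant term, then
`(1 - PQ)(1 - QP)⁻¹` is a product of two commutators. -/
lemma swap_mem_of_both_zero (P Q : PowerSeries R)
    (hP : constantCoeff P = 0) (hQ : constantCoeff Q = 0)
    (x y : (PowerSeries R)ˣ)
    (hx : (x : PowerSeries R) = 1 - P * Q)
    (hy : (y : PowerSeries R) = 1 - Q * P) :
    x * y⁻¹ ∈ Subgroup.closure (WittRelations R) := by
  have hP1 : constantCoeff (1 - P : PowerSeries R) = 1 := by
    simp [map_sub, hP]
  have hQ1 : constantCoeff (1 - Q : PowerSeries R) = 1 := by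
    simp [map_sub, hQ]
  set p : (PowerSeries R)ˣ := uo (1 - P) hP1 with hp_def
  set q : (PowerSeries R)ˣ := uo (1 - Q) hQ1 with hq_def
  set W : PowerSeries R := ((p⁻¹ : (PowerSeries R)ˣ) : PowerSeries R) with hW_def
  have hW1 : (1 - P) * W = 1 := p.mul_inv
  have hW2 : W * (1 - P) = 1 := p.inv_mul
  have hWc : constantCoeff W = 1 := constantCoeff_inv_eq_one p hP1
  have hAc : constantCoeff (1 + W * P * (1 - Q) : PowerSeries R) = 1 := by
    simp [map_add, map_mul, hP, hWc]
  set a : (PowerSeries R)ˣ := uo (1 + W * P * (1 - Q)) hAc with ha_def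
  have hac : constantCoeff (a : PowerSeries R) = 1 := hAc
  have hpc : constantCoeff (p : PowerSeries R) = 1 := hP1
  have hqc : constantCoeff (q : PowerSeries R) = 1 := hQ1
  -- x = p * a
  have hxa : x = p * a := by
    apply Units.ext
    rw [hx, Units.val_mul]
    show (1 : PowerSeries R) - P * Q = (1 - P) * (1 + W * P * (1 - Q))
    have e1 : (1 - P) * (1 + W * P * (1 - Q)) =
        (1 - P) + ((1 - P) * W) * (P * (1 - Q)) := by noncomm_ring
    rw [e1, hW1, one_mul]
    noncomm_ring
  -- y = q * a * q⁻¹ * p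
  have hyb : y = q * a * q⁻¹ * p := by
    apply Units.ext
    rw [hy]
    have hq2 : ((1 : PowerSeries R) - Q) * ((q⁻¹ : (PowerSeries R)ˣ) : PowerSeries R) = 1 :=
      q.mul_inv
    show (1 : PowerSeries R) - Q * P =
        ((1 - Q) * (1 + W * P * (1 - Q)) *
          ((q⁻¹ : (PowerSeries R)ˣ) : PowerSeries R)) * (1 - P)
    have e1 : ((1 : PowerSeries R) - Q) * (1 + W * P * (1 - Q)) =
        (1 + (1 - Q) * W * P) * (1 - Q) := by noncomm_ring
    rw [e1, mul_assoc (1 + (1 - Q) * W * P), hq2, mul_one]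
    have e2 : ((1 : PowerSeries R) + (1 - Q) * W * P) * (1 - P) =
        (1 - P) + (1 - Q) * (W * ((1 - P) * P)) := by noncomm_ring
    rw [e2, ← mul_assoc W, hW2, one_mul]
    noncomm_ring
  rw [hxa, hyb]
  have hgrp : p * a * (q * a * q⁻¹ * p)⁻¹ =
      (p * a * p⁻¹ * a⁻¹) * (a * q * a⁻¹ * q⁻¹) := by group
  rw [hgrp]
  exact (Subgroup.closure (WittRelations R)).mul_mem
    (comm_mem p a hpc hac) (comm_mem a q hac hqc)

/-- Reduction: for `F` with zero constant term and arbitrary `G`, the swap element for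
`(F, G)` agrees modulo the closure with the swap element for `(F, c(G))`. -/
lemma reduce_to_scalar (F G : PowerSeries R) (hF : constantCoeff F = 0)
    (x y z w : (PowerSeries R)ˣ)
    (hx : (x : PowerSeries R) = 1 - F * G)
    (hy : (y : PowerSeries R) = 1 - G * F)
    (hz : (z : PowerSeries R) = 1 - F * C (constantCoeff G))
    (hw : (w : PowerSeries R) = 1 - C (constantCoeff G) * F) :
    x * y⁻¹ * (z * w⁻¹)⁻¹ ∈ Subgroup.closure (WittRelations R) := by
  set b : PowerSeries R := C (constantCoeff G) with hb_def
  set h : PowerSeries R := G - b with hh_def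
  have hh0 : constantCoeff h = 0 := by
    simp [hh_def, hb_def, map_sub, PowerSeries.constantCoeff_C]
  have hG : G = b + h := by rw [hh_def]; abel
  set W : PowerSeries R := ((z⁻¹ : (PowerSeries R)ˣ) : PowerSeries R) with hW_def
  set W' : PowerSeries R := ((w⁻¹ : (PowerSeries R)ˣ) : PowerSeries R) with hW'_def
  have hzW : (1 - F * b) * W = 1 := by
    have := z.mul_inv; rwa [hz] at this
  have hWz : W * (1 - F * b) = 1 := by
    have := z.inv_mul; rwa [hz] at this
  have hzc : constantCoeff (z : PowerSeries R) = 1 := by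
    rw [hz]; simp [map_sub, map_mul, hF]
  have hwc : constantCoeff (w : PowerSeries R) = 1 := by
    rw [hw]; simp [map_sub, map_mul, hF]
  have hWc : constantCoeff W = 1 := constantCoeff_inv_eq_one z hzc
  have hW'c : constantCoeff W' = 1 := constantCoeff_inv_eq_one w hwc
  have hm1c : constantCoeff (1 - (W * F) * h : PowerSeries R) = 1 := by
    simp [map_sub, map_mul, hF, hWc]
  have hm3c : constantCoeff (1 - h * (W * F) : PowerSeries R) = 1 := by
    simp [map_sub, map_mul, hh0]
  set m1 : (PowerSeries R)ˣ := uo (1 - (W * F) * h) hm1c with hm1_def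
  set m3 : (PowerSeries R)ˣ := uo (1 - h * (W * F)) hm3c with hm3_def
  -- x = z * m1
  have hxzm : x = z * m1 := by
    apply Units.ext
    rw [hx, Units.val_mul, hz]
    have hm1v : (m1 : PowerSeries R) = 1 - (W * F) * h := rfl
    rw [hm1v]
    have e1 : ((1 : PowerSeries R) - F * b) * (1 - (W * F) * h) =
        (1 - F * b) - ((1 - F * b) * W) * (F * h) := by noncomm_ring
    rw [e1, hzW, one_mul]
    rw [hG]; noncomm_ring
  -- y = m3 * w
  have hym : y = m3 * w := by
    apply Units.ext
    rw [hy, Units.val_mul, hw]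
    have hm3v : (m3 : PowerSeries R) = 1 - h * (W * F) := rfl
    rw [hm3v]
    have key : (W * F) * (1 - b * F) = F := by
      have e2 : (W * F) * (1 - b * F) = W * ((1 - F * b) * F) := by noncomm_ring
      rw [e2, ← mul_assoc, hWz, one_mul]
    have e3 : ((1 : PowerSeries R) - h * (W * F)) * (1 - b * F) =
        (1 - b * F) - h * ((W * F) * (1 - b * F)) := by noncomm_ring
    rw [e3, key, hG]; noncomm_ring
  have hm3cc : constantCoeff (m3 : PowerSeries R) = 1 := hm3c
  have hinner1 : m1 * m3⁻¹ ∈ Subgroup.closure (WittRelations R) := by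
    apply swap_mem_of_both_zero (W * F) h
      (by simp [map_mul, hF]) hh0 m1 m3 rfl rfl
  have hinner2 : m3 * w⁻¹ * m3⁻¹ * (w⁻¹)⁻¹ ∈ Subgroup.closure (WittRelations R) :=
    comm_mem m3 w⁻¹ hm3cc (constantCoeff_inv_eq_one w hwc)
  have hinner : m1 * m3⁻¹ * (m3 * w⁻¹ * m3⁻¹ * (w⁻¹)⁻¹) ∈ Subgroup.closure (WittRelations R) :=
    (Subgroup.closure (WittRelations R)).mul_mem hinner1 hinner2
  have hconj := conj_mem z _ hzc hinner
  have hgrp : z * (m1 * m3⁻¹ * (m3 * w⁻¹ * m3⁻¹ * (w⁻¹)⁻¹)) * z⁻¹ =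
      (z * m1) * (m3 * w)⁻¹ * (z * w⁻¹)⁻¹ := by group
  rw [hgrp] at hconj
  rwa [hxzm, hym]

/-- Main membership lemma: if `c(f) = 0` then `(1-fg)(1-gf)⁻¹` lies in the subgroup
generated by the Witt relations. -/
lemma main_mem (f g : PowerSeries R) (hf : constantCoeff f = 0)
    (x y : (PowerSeries R)ˣ)
    (hx : (x : PowerSeries R) = 1 - f * g)
    (hy : (y : PowerSeries R) = 1 - g * f) :
    x * y⁻¹ ∈ Subgroup.closure (WittRelations R) := by
  set b : R := constantCoeff g with hb_def
  have hzc : constantCoeff (1 - f * C b : PowerSeries R) = 1 := by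
    simp [map_sub, map_mul, hf]
  have hwc : constantCoeff (1 - C b * f : PowerSeries R) = 1 := by
    simp [map_sub, map_mul, hf]
  set z : (PowerSeries R)ˣ := uo (1 - f * C b) hzc with hz_def
  set w : (PowerSeries R)ˣ := uo (1 - C b * f) hwc with hw_def
  have step1 : x * y⁻¹ * (z * w⁻¹)⁻¹ ∈ Subgroup.closure (WittRelations R) :=
    reduce_to_scalar f g hf x y z w hx hy rfl rfl
  obtain ⟨f₁, hf₁⟩ : (X : PowerSeries R) ∣ f := X_dvd_iff.mpr hf
  set b₂ : R := constantCoeff f₁ with hb₂_def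
  have hBc : constantCoeff (C b * X : PowerSeries R) = 0 := by simp
  have hz₂c : constantCoeff (1 - (C b * X) * C b₂ : PowerSeries R) = 1 := by
    simp [map_sub, map_mul]
  have hw₂c : constantCoeff (1 - C b₂ * (C b * X) : PowerSeries R) = 1 := by
    simp [map_sub, map_mul]
  set z₂ : (PowerSeries R)ˣ := uo (1 - (C b * X) * C b₂) hz₂c with hz₂_def
  set w₂ : (PowerSeries R)ˣ := uo (1 - C b₂ * (C b * X)) hw₂c with hw₂_def
  have hwv : (w : PowerSeries R) = 1 - (C b * X) * f₁ := by
    show (1 : PowerSeries R) - C b * f = 1 - (C b * X) * f₁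
    rw [hf₁, mul_assoc]
  have hzv : (z : PowerSeries R) = 1 - f₁ * (C b * X) := by
    show (1 : PowerSeries R) - f * C b = 1 - f₁ * (C b * X)
    rw [hf₁]
    have : f₁ * (C b * X) = X * f₁ * C b := by
      have h1 : f₁ * C b * X = X * (f₁ * C b) := (commute_X (f₁ * C b)).symm ▸ rfl
      calc f₁ * (C b * X) = (f₁ * C b) * X := by rw [mul_assoc]
        _ = X * (f₁ * C b) := commute_X (f₁ * C b)
        _ = X * f₁ * C b := by rw [mul_assoc]
    rw [this]
  have step2 : w * z⁻¹ * (z₂ * w₂⁻¹)⁻¹ ∈ Subgroup.closure (WittRelations R) := by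
    apply reduce_to_scalar (C b * X) f₁ hBc w z z₂ w₂ hwv hzv rfl rfl
  have step3 : z₂ * w₂⁻¹ ∈ Subgroup.closure (WittRelations R) := by
    apply Subgroup.subset_closure
    right
    refine ⟨-b, b₂, z₂, w₂, ?_, ?_, rfl⟩
    · show (1 : PowerSeries R) - (C b * X) * C b₂ = 1 + C ((-b) * b₂) * X
      have e1 : (C b * X) * C b₂ = C (b * b₂) * X := by
        rw [mul_assoc, ← commute_X (C b₂)]
        rw [← mul_assoc, ← map_mul]
      rw [e1, neg_mul, map_neg, neg_mul]
      abel
    · show (1 : PowerSeries R) - C b₂ * (C b * X) = 1 + C (b₂ * (-b)) * X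
      have e1 : C b₂ * (C b * X) = C (b₂ * b) * X := by
        rw [← mul_assoc, ← map_mul]
      rw [e1, mul_neg, map_neg, neg_mul]
      abel
  have step4 : w * z⁻¹ ∈ Subgroup.closure (WittRelations R) := by
    have := (Subgroup.closure (WittRelations R)).mul_mem step2 step3
    have hgrp : w * z⁻¹ * (z₂ * w₂⁻¹)⁻¹ * (z₂ * w₂⁻¹) = w * z⁻¹ := by group
    rwa [hgrp] at this
  have step5 : z * w⁻¹ ∈ Subgroup.closure (WittRelations R) := by
    have := (Subgroup.closure (WittRelations R)).inv_mem step4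
    have hgrp : (w * z⁻¹)⁻¹ = z * w⁻¹ := by group
    rwa [hgrp] at this
  have := (Subgroup.closure (WittRelations R)).mul_mem step1 step5
  have hgrp : x * y⁻¹ * (z * w⁻¹)⁻¹ * (z * w⁻¹) = x * y⁻¹ := by group
  rwa [hgrp] at this

end WittSwapAux

/-- If `f, g ∈ R⟦t⟧` and at least one of them has constant term zero, then
`1 - fg` and `1 - gf` become equal in `W(R)`, i.e. `(1 - fg)(1 - gf)⁻¹` lies in the
`t`-adic closure of the subgroup generated by commutators and the elements
`(1 + rst)(1 + srt)⁻¹`: for each `n` we can write `1 - fg = w * h * (1 - gf)` with `h`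
in the subgroup generated by the relations and `w ∈ 1 + tⁿ R⟦t⟧`. -/
theorem stmt2 (R : Type*) [Ring R] (f g : PowerSeries R)
    (hfg : PowerSeries.constantCoeff f = 0 ∨ PowerSeries.constantCoeff g = 0) :
    ∀ n : ℕ, ∃ h : (PowerSeries R)ˣ, h ∈ Subgroup.closure (WittRelations R) ∧
      ∃ w : PowerSeries R, PowerSeries.constantCoeff w = 1 ∧
        (∀ k, 1 ≤ k → k < n → PowerSeries.coeff k w = 0) ∧
        (1 - f * g) = w * (h : PowerSeries R) * (1 - g * f) := by
  intro n
  have hfg0 : PowerSeries.constantCoeff (f * g) = 0 := by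
    rcases hfg with h | h <;> simp [map_mul, h]
  have hgf0 : PowerSeries.constantCoeff (g * f) = 0 := by
    rcases hfg with h | h <;> simp [map_mul, h]
  have hxc : PowerSeries.constantCoeff (1 - f * g : PowerSeries R) = 1 := by
    simp [map_sub, hfg0]
  have hyc : PowerSeries.constantCoeff (1 - g * f : PowerSeries R) = 1 := by
    simp [map_sub, hgf0]
  set x : (PowerSeries R)ˣ := WittSwapAux.uo (1 - f * g) hxc with hx_def
  set y : (PowerSeries R)ˣ := WittSwapAux.uo (1 - g * f) hyc with hy_def
  have hmem : x * y⁻¹ ∈ Subgroup.closure (WittRelations R) := by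
    rcases hfg with h | h
    · exact WittSwapAux.main_mem f g h x y rfl rfl
    · have hmem' := WittSwapAux.main_mem g f h y x rfl rfl
      have hgrp : x * y⁻¹ = (y * x⁻¹)⁻¹ := by group
      rw [hgrp]
      exact (Subgroup.closure (WittRelations R)).inv_mem hmem'
  refine ⟨x * y⁻¹, hmem, 1, by simp, ?_, ?_⟩
  · intro k hk1 _
    rw [PowerSeries.coeff_one]
    simp [Nat.one_le_iff_ne_zero.mp hk1]
  · have hval : ((x * y⁻¹ : (PowerSeries R)ˣ) : PowerSeries R) * (1 - g * f) = 1 - f * g := by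
      rw [Units.val_mul]
      have hyy : ((y⁻¹ : (PowerSeries R)ˣ) : PowerSeries R) * (1 - g * f) = 1 := by
        have := y.inv_mul
        rwa [show ((y : (PowerSeries R)ˣ) : PowerSeries R) = 1 - g * f from rfl] at this
      rw [mul_assoc, hyy, mul_one]
      rfl
    rw [one_mul, hval]
end

section
/- Let R be a commutative ring and A ∈ Matₙ(R). The negative logarithmic derivative of χ_A(t) = det(1 - At) satisfies -χ_A'(t)·χ_A(t)⁻¹ = tr(A) + tr(A²)·t + tr(A³)·t² + ... in R⟦t⟧; i.e. the coefficient of tᵏ of -χ_A'/χ_A equals tr(A^{k+1}) for all k ≥ 0. -/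
open Polynomial PowerSeries Matrix

private lemma derivation_prod {R S : Type*} [CommRing R] [CommRing S] [Algebra R S]
    (D : Derivation R S S) {ι : Type*} [DecidableEq ι] (s : Finset ι) (f : ι → S) :
    D (∏ i ∈ s, f i) = ∑ i ∈ s, (∏ j ∈ s.erase i, f j) * D (f i) := by
  induction s using Finset.induction_on with
  | empty => simp
  | @insert a s ha ih =>
    rw [Finset.prod_insert ha, D.leibniz, Finset.sum_insert ha, Finset.erase_insert ha, ih,
      smul_eq_mul, smul_eq_mul, Finset.mul_sum, add_comm]
    congr 1
    apply Finset.sum_congr rfl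
    intro i hi
    rw [Finset.erase_insert_of_ne (by rintro rfl; exact ha hi),
      Finset.prod_insert (fun h => ha (Finset.mem_of_mem_erase h)), mul_assoc]

private lemma derivation_det {R S : Type*} [CommRing R] [CommRing S] [Algebra R S]
    (D : Derivation R S S) {m : ℕ} (M : Matrix (Fin m) (Fin m) S) :
    D M.det = ∑ j, (M.updateCol j fun i => D (M i j)).det := by
  rw [Matrix.det_apply', map_sum]
  have h1 : ∀ σ : Equiv.Perm (Fin m),
      D (((Equiv.Perm.sign σ : ℤ) : S) * ∏ i, M (σ i) i) =
      ∑ j, ((Equiv.Perm.sign σ : ℤ) : S) *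
        ((∏ i ∈ Finset.univ.erase j, M (σ i) i) * D (M (σ j) j)) := by
    intro σ
    rw [D.leibniz, D.map_intCast, smul_zero, add_zero, smul_eq_mul, derivation_prod,
      Finset.mul_sum]
  simp_rw [h1]
  rw [Finset.sum_comm]
  apply Finset.sum_congr rfl
  intro j _
  rw [Matrix.det_apply']
  apply Finset.sum_congr rfl
  intro σ _
  congr 1
  rw [← Finset.mul_prod_erase _ _ (Finset.mem_univ j),
    Matrix.updateCol_apply, if_pos rfl, mul_comm]
  congr 1
  apply Finset.prod_congr rfl
  intro i hi
  rw [Matrix.updateCol_apply, if_neg (Finset.ne_of_mem_erase hi)]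

/-- For a commutative ring `R` and `A ∈ Matₙ(R)`, the negative logarithmic derivative of
`χ_A(t) = det(1 - A t)` satisfies `-χ_A'·χ_A⁻¹ = tr(A) + tr(A²) t + tr(A³) t² + ⋯`:
the coefficient of `tᵏ` equals `tr(A^(k+1))`. -/
theorem stmt9 (R : Type*) [CommRing R] (n : ℕ) (A : Matrix (Fin n) (Fin n) R)
    (u : (PowerSeries R)ˣ)
    (hu : (u : PowerSeries R) =
      ((Matrix.det (1 - (Polynomial.X : R[X]) • A.map Polynomial.C) : R[X]) : PowerSeries R)) :
    ∀ k : ℕ, PowerSeries.coeff (R := R) k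
        (-(PowerSeries.derivative R (u : PowerSeries R) *
            ((u⁻¹ : (PowerSeries R)ˣ) : PowerSeries R))) =
      Matrix.trace (A ^ (k + 1)) := by
  intro k
  set Ac : Matrix (Fin n) (Fin n) R⟦X⟧ := A.map (PowerSeries.C (R := R)) with hAc
  set M : Matrix (Fin n) (Fin n) R⟦X⟧ :=
    1 - (PowerSeries.X : R⟦X⟧) • Ac with hM
  set N : Matrix (Fin n) (Fin n) R⟦X⟧ :=
    Matrix.of (fun i j => PowerSeries.mk fun k => (A ^ k) i j) with hN
  -- u = det M
  have hu' : (u : PowerSeries R) = M.det := by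
    rw [hu, ← Polynomial.coeToPowerSeries.ringHom_apply, RingHom.map_det]
    congr 1
    ext i j
    simp only [RingHom.mapMatrix_apply, Matrix.map_apply, Matrix.sub_apply, Matrix.smul_apply,
      Matrix.one_apply, smul_eq_mul, hM, hAc, Polynomial.coeToPowerSeries.ringHom_apply]
    refine congrArg _ ?_
    by_cases h : i = j
    · simp only [h, if_true]
      rw [Polynomial.coe_sub, Polynomial.coe_one, Polynomial.coe_mul, Polynomial.coe_X,
        Polynomial.coe_C]
    · simp only [h, if_false]
      rw [Polynomial.coe_sub, Polynomial.coe_zero, Polynomial.coe_mul, Polynomial.coe_X,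
        Polynomial.coe_C]
  -- coefficients of Ac * N
  have hAcN : ∀ (i j : Fin n) (m : ℕ),
      PowerSeries.coeff (R := R) m ((Ac * N) i j) = (A ^ (m + 1)) i j := by
    intro i j m
    rw [Matrix.mul_apply, map_sum]
    simp only [hAc, hN, Matrix.map_apply, Matrix.of_apply, PowerSeries.coeff_C_mul,
      PowerSeries.coeff_mk]
    rw [pow_succ', Matrix.mul_apply]
  -- M * N = 1
  have hMN : M * N = 1 := by
    rw [hM, Matrix.sub_mul, Matrix.one_mul, Matrix.smul_mul, sub_eq_iff_eq_add]
    ext i j m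
    rw [Matrix.add_apply, map_add, Matrix.smul_apply, smul_eq_mul]
    cases m with
    | zero =>
      rw [PowerSeries.coeff_zero_X_mul, add_zero]
      simp only [hN, Matrix.of_apply, PowerSeries.coeff_mk, pow_zero]
      by_cases h : i = j <;> simp [h, Matrix.one_apply]
    | succ m =>
      rw [PowerSeries.coeff_succ_X_mul, hAcN]
      simp only [hN, Matrix.of_apply, PowerSeries.coeff_mk]
      have : PowerSeries.coeff (R := R) (m + 1) ((1 : Matrix (Fin n) (Fin n) R⟦X⟧) i j) = 0 := by
        by_cases h : i = j <;> simp [h, Matrix.one_apply, PowerSeries.coeff_one]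
      rw [this, zero_add]
  -- adjugate M = det M • N
  have hadj : Matrix.adjugate M = M.det • N := by
    calc Matrix.adjugate M = Matrix.adjugate M * (M * N) := by rw [hMN, mul_one]
      _ = (Matrix.adjugate M * M) * N := by rw [mul_assoc]
      _ = (M.det • (1 : Matrix (Fin n) (Fin n) R⟦X⟧)) * N := by rw [Matrix.adjugate_mul]
      _ = M.det • N := by rw [Matrix.smul_mul, Matrix.one_mul]
  -- derivative of entries of M
  have hDM : ∀ i j, (PowerSeries.derivative R) (M i j) = -(Ac i j) := by
    intro i j
    have : M i j = (1 : Matrix (Fin n) (Fin n) R⟦X⟧) i j - PowerSeries.X * Ac i j := by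
      simp [hM, Matrix.sub_apply, Matrix.smul_apply, smul_eq_mul]
    rw [this, map_sub, Derivation.leibniz, hAc]
    have h1 : (PowerSeries.derivative R) ((1 : Matrix (Fin n) (Fin n) R⟦X⟧) i j) = 0 := by
      by_cases h : i = j <;> simp [h, Matrix.one_apply]
    simp [h1, Matrix.map_apply]
  -- Jacobi + computation of derivative of det
  have hDdet : (PowerSeries.derivative R) M.det = -(M.det * Matrix.trace (N * Ac)) := by
    rw [derivation_det (PowerSeries.derivative R) M]
    have h2 : ∀ j : Fin n, (M.updateCol j fun i => (PowerSeries.derivative R) (M i j)).det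
        = -((Matrix.adjugate M).mulVec (fun i => Ac i j) j) := by
      intro j
      have hv : (fun i => (PowerSeries.derivative R) (M i j)) = -(fun i => Ac i j) := by
        funext i; rw [hDM]; rfl
      rw [hv, ← Matrix.cramer_apply, map_neg, Matrix.cramer_eq_adjugate_mulVec,
        Pi.neg_apply]
    have h3 : ∀ j : Fin n, (Matrix.adjugate M).mulVec (fun i => Ac i j) j
        = M.det * (N * Ac) j j := by
      intro j
      rw [hadj, Matrix.smul_mulVec, Pi.smul_apply, smul_eq_mul]
      exact congrArg _ (by simp [Matrix.mulVec, dotProduct, Matrix.mul_apply])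
    simp_rw [h2, h3]
    rw [Matrix.trace, Finset.mul_sum, ← Finset.sum_neg_distrib]
    rfl
  -- final assembly
  have hT : -((PowerSeries.derivative R) (u : PowerSeries R) * ((u⁻¹ : (PowerSeries R)ˣ) : PowerSeries R))
      = Matrix.trace (N * Ac) := by
    rw [hu', hDdet, neg_mul, neg_neg, ← hu', mul_comm (u : PowerSeries R), mul_assoc,
      Units.mul_inv, mul_one]
  rw [hT, Matrix.trace, map_sum, pow_succ, Matrix.trace]
  apply Finset.sum_congr rfl
  intro x _
  rw [Matrix.diag_apply, Matrix.diag_apply, Matrix.mul_apply, Matrix.mul_apply, map_sum]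
  apply Finset.sum_congr rfl
  intro l _
  simp [hN, hAc, PowerSeries.coeff_mul_C, PowerSeries.coeff_mk]
end
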